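/- Let A be a commutative ring, and let φ: C• → D• be a morphism of bounded-above chain complexes of projective A-modules. If for every maximal ideal m of A the induced morphism C• ⊗_A A/m → D• ⊗_A A/m is a quasi-isomorphism, then φ is a quasi-isomorphism, provided additionally that A is Noetherian and all homology modules of the mapping cone of φ are finitely generated. -/

import Mathlib

open CategoryTheory CategoryTheory.Limits

open scoped TensorProduct

universe u

/-- A morphism of cochain complexes in an abelian category is a quasi-isomorphism iff its
mapping cone is acyclic. -/
lemma quasiIso_iff_mappingCone_exactAt' {C : Type*} [Category C] [Abelian C]
    {K L : CochainComplex C ℤ} (f : K ⟶ L) :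
    QuasiIso f ↔ ∀ n : ℤ, (CochainComplex.mappingCone f).ExactAt n := by
  rw [← HomologicalComplex.mem_quasiIso_iff,
    ← HomotopyCategory.quotient_map_mem_quasiIso_iff,
    HomotopyCategory.quasiIso_eq_trW_subcategoryAcyclic]
  exact ((HomotopyCategory.subcategoryAcyclic C).trW_iff_of_distinguished _
    (HomotopyCategory.mappingCone_triangleh_distinguished f)).trans
    (HomotopyCategory.quotient_obj_mem_subcategoryAcyclic_iff_exactAt _)

/-- Exactness at a degree transfers along isomorphisms of complexes. -/
lemma exactAt_of_iso' {C : Type*} [Category C] [Abelian C] {ι : Type*} {c : ComplexShape ι}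
    {K L : HomologicalComplex C c} (e : K ≅ L) {n : ι} (h : K.ExactAt n) : L.ExactAt n := by
  rw [HomologicalComplex.exactAt_iff_isZero_homology] at h ⊢
  exact h.of_iso ((HomologicalComplex.homologyFunctor C c n).mapIso e.symm)

/-- Nakayama: a finitely generated module killed by every residue field is zero. -/
lemma subsingleton_of_smul_top_eq_top {A : Type u} [CommRing A] {M : Type u}
    [AddCommGroup M] [Module A M] [Module.Finite A M]
    (h : ∀ m : Ideal A, m.IsMaximal → (m • ⊤ : Submodule A M) = ⊤) :
    Subsingleton M := by
  by_contra hM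
  have hnt : Nontrivial M := not_subsingleton_iff_nontrivial.mp hM
  have hann : Module.annihilator A M ≠ ⊤ := by
    intro h'
    obtain ⟨x, y, hxy⟩ := hnt
    have h1 : (1 : A) ∈ Module.annihilator A M := h' ▸ trivial
    have hz := Module.mem_annihilator.mp h1
    exact hxy (by rw [← one_smul A x, hz x, ← one_smul A y, hz y])
  obtain ⟨m, hm, hle⟩ := Ideal.exists_le_maximal _ hann
  obtain ⟨r, hr1, hr0⟩ := Submodule.exists_sub_one_mem_and_smul_eq_zero_of_fg_of_le_smul m
    (⊤ : Submodule A M) (Module.finite_def.mp ‹_›) (by rw [h m hm])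
  have hrann : r ∈ Module.annihilator A M :=
    Module.mem_annihilator.mpr (fun x => hr0 x trivial)
  have h1m : (1 : A) ∈ m := by
    have := m.sub_mem (hle hrann) hr1
    simpa using this
  exact hm.ne_top (m.eq_top_iff_one.mpr h1m)

/-- The key inductive step: pure module theory. -/
lemma step_lemma {A : Type u} [CommRing A] [IsNoetherianRing A]
    {M₀ M₁ M₂ M₃ : Type u} [AddCommGroup M₀] [Module A M₀] [AddCommGroup M₁] [Module A M₁]
    [AddCommGroup M₂] [Module A M₂] [AddCommGroup M₃] [Module A M₃]
    [Module.Finite A M₁] [Module.Projective A M₂]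
    (d₀ : M₀ →ₗ[A] M₁) (d₁ : M₁ →ₗ[A] M₂) (d₂ : M₂ →ₗ[A] M₃)
    (h10 : ∀ x, d₁ (d₀ x) = 0) (h21 : ∀ x, d₂ (d₁ x) = 0)
    (r₁ : M₂ →ₗ[A] LinearMap.ker d₂) (hr₁ : ∀ z : LinearMap.ker d₂, r₁ z = z)
    (hsurj₁ : ∀ z : M₂, d₂ z = 0 → ∃ y, d₁ y = z)
    (htens : ∀ (m : Ideal A), m.IsMaximal → ∀ x : M₁ ⊗[A] (A ⧸ m),
      LinearMap.rTensor (A ⧸ m) d₁ x = 0 →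
        ∃ y : M₀ ⊗[A] (A ⧸ m), LinearMap.rTensor (A ⧸ m) d₀ y = x) :
    (∃ r₀ : M₁ →ₗ[A] LinearMap.ker d₁, ∀ z : LinearMap.ker d₁, r₀ z = z) ∧
      (∀ z : M₁, d₁ z = 0 → ∃ y, d₀ y = z) := by
  have hproj2 : Module.Projective A (LinearMap.ker d₂) :=
    Module.Projective.of_split (LinearMap.ker d₂).subtype r₁
      (by ext z; exact congrArg Subtype.val (hr₁ z))
  set d₁' : M₁ →ₗ[A] LinearMap.ker d₂ :=
    d₁.codRestrict (LinearMap.ker d₂) (fun x => LinearMap.mem_ker.mpr (h21 x)) with hd₁'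
  have hd₁'surj : Function.Surjective d₁' := by
    rintro ⟨z, hz⟩
    obtain ⟨y, hy⟩ := hsurj₁ z (LinearMap.mem_ker.mp hz)
    exact ⟨y, Subtype.ext hy⟩
  obtain ⟨s, hs⟩ := Module.projective_lifting_property d₁' LinearMap.id hd₁'surj
  have hds : ∀ z : LinearMap.ker d₂, d₁ (s z) = (z : M₂) := fun z =>
    congrArg Subtype.val (LinearMap.congr_fun hs z)
  have hker : ∀ x : M₁, (LinearMap.id - (s ∘ₗ d₁') : M₁ →ₗ[A] M₁) x ∈ LinearMap.ker d₁ := by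
    intro x
    rw [LinearMap.mem_ker]
    show d₁ (x - s (d₁' x)) = 0
    rw [map_sub, hds (d₁' x)]
    show d₁ x - d₁ x = 0
    exact sub_self _
  set r₀ : M₁ →ₗ[A] LinearMap.ker d₁ :=
    ((LinearMap.id - (s ∘ₗ d₁') : M₁ →ₗ[A] M₁)).codRestrict (LinearMap.ker d₁) hker with hr₀def
  have hr₀ : ∀ z : LinearMap.ker d₁, r₀ (z : M₁) = z := by
    rintro ⟨z, hz⟩
    apply Subtype.ext
    show z - s (d₁' z) = z
    have hz0 : d₁' z = 0 := Subtype.ext (LinearMap.mem_ker.mp hz)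
    rw [hz0, map_zero, sub_zero]
  set d₀' : M₀ →ₗ[A] LinearMap.ker d₁ :=
    d₀.codRestrict (LinearMap.ker d₁) (fun x => LinearMap.mem_ker.mpr (h10 x)) with hd₀'
  set N : Submodule A (LinearMap.ker d₁) := LinearMap.range d₀' with hNdef
  have hr₀d₀ : ∀ y : M₀, r₀ (d₀ y) = d₀' y := by
    intro y
    apply Subtype.ext
    show d₀ y - s (d₁' (d₀ y)) = d₀ y
    have h0 : d₁' (d₀ y) = 0 := Subtype.ext (h10 y)
    rw [h0, map_zero, sub_zero]
  haveI hNoeth : IsNoetherian A M₁ := inferInstance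
  haveI hfinker : Module.Finite A (LinearMap.ker d₁) :=
    Module.Finite.iff_fg.mpr (IsNoetherian.noetherian _)
  haveI hQfin : Module.Finite A (LinearMap.ker d₁ ⧸ N) :=
    Module.Finite.of_surjective N.mkQ (Submodule.mkQ_surjective N)
  have hQsub : Subsingleton (LinearMap.ker d₁ ⧸ N) := by
    apply subsingleton_of_smul_top_eq_top (A := A)
    intro m hm
    rw [eq_top_iff]
    rintro q -
    obtain ⟨z, rfl⟩ := N.mkQ_surjective q
    -- the map `g₂ : M₁ → (ker d₁)/N`
    set g₂ : M₁ →ₗ[A] (LinearMap.ker d₁ ⧸ N) := N.mkQ ∘ₗ r₀ with hg₂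
    have hg₂d₀ : g₂ ∘ₗ d₀ = 0 := by
      ext y
      show N.mkQ (r₀ (d₀ y)) = 0
      rw [hr₀d₀ y]
      exact (Submodule.Quotient.mk_eq_zero N).mpr ⟨y, rfl⟩
    -- tensor exactness
    have hx0 : LinearMap.rTensor (A ⧸ m) d₁ ((z : M₁) ⊗ₜ (1 : A ⧸ m)) = 0 := by
      rw [LinearMap.rTensor_tmul, LinearMap.mem_ker.mp z.2, TensorProduct.zero_tmul]
    obtain ⟨y, hy⟩ := htens m hm ((z : M₁) ⊗ₜ (1 : A ⧸ m)) hx0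
    have key : (N.mkQ z) ⊗ₜ (1 : A ⧸ m) = (0 : (LinearMap.ker d₁ ⧸ N) ⊗[A] (A ⧸ m)) := by
      have h1 : LinearMap.rTensor (A ⧸ m) g₂ ((z : M₁) ⊗ₜ (1 : A ⧸ m))
          = (N.mkQ z) ⊗ₜ (1 : A ⧸ m) := by
        rw [LinearMap.rTensor_tmul]
        congr 1
        show N.mkQ (r₀ (z : M₁)) = N.mkQ z
        rw [hr₀ z]
      calc (N.mkQ z) ⊗ₜ (1 : A ⧸ m)
          = LinearMap.rTensor (A ⧸ m) g₂ ((z : M₁) ⊗ₜ (1 : A ⧸ m)) := h1.symm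
        _ = LinearMap.rTensor (A ⧸ m) g₂ (LinearMap.rTensor (A ⧸ m) d₀ y) := by rw [hy]
        _ = LinearMap.rTensor (A ⧸ m) (g₂ ∘ₗ d₀) y := by
              exact (LinearMap.rTensor_comp_apply _ _ _ _).symm
        _ = 0 := by rw [hg₂d₀, LinearMap.rTensor_zero, LinearMap.zero_apply]
    -- conclude membership in `m • ⊤`
    rw [← Submodule.Quotient.mk_eq_zero (m • (⊤ : Submodule A (LinearMap.ker d₁ ⧸ N)))]
    have h2 : (TensorProduct.tensorQuotEquivQuotSMul (LinearMap.ker d₁ ⧸ N) m)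
          ((N.mkQ z) ⊗ₜ (Ideal.Quotient.mk m 1))
        = Submodule.Quotient.mk ((1 : A) • (N.mkQ z)) :=
      TensorProduct.tensorQuotEquivQuotSMul_tmul_mk m _ 1
    have h3 : ((N.mkQ z) ⊗ₜ (Ideal.Quotient.mk m 1)
        : (LinearMap.ker d₁ ⧸ N) ⊗[A] (A ⧸ m)) = 0 := by
      simpa using key
    rw [h3, map_zero] at h2
    simpa using h2.symm
  have hN : N = ⊤ := Submodule.Quotient.subsingleton_iff.mp hQsub
  refine ⟨⟨r₀, hr₀⟩, ?_⟩
  intro z hz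
  have hmem : (⟨z, LinearMap.mem_ker.mpr hz⟩ : LinearMap.ker d₁) ∈ N := hN ▸ trivial
  obtain ⟨y, hy⟩ := hmem
  exact ⟨y, congrArg Subtype.val hy⟩

/-- A bounded-above complex of finite projective modules over a Noetherian ring which becomes
acyclic modulo every maximal ideal is acyclic. -/
lemma acyclic_of_tensor_acyclic {A : Type u} [CommRing A] [IsNoetherianRing A]
    (K : CochainComplex (ModuleCat.{u} A) ℤ)
    (hproj : ∀ n : ℤ, Projective (K.X n)) (hfin : ∀ n : ℤ, Module.Finite A (K.X n))
    (b : ℤ) (hb : ∀ n : ℤ, b < n → IsZero (K.X n))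
    (htens : ∀ (m : Ideal A), m.IsMaximal → ∀ n : ℤ,
      (((MonoidalCategory.tensorRight (ModuleCat.of A (A ⧸ m))).mapHomologicalComplex
        (ComplexShape.up ℤ)).obj K).ExactAt n) :
    ∀ n : ℤ, K.ExactAt n := by
  -- concrete form of the tensored exactness
  have htens' : ∀ (m : Ideal A), m.IsMaximal → ∀ i j : ℤ, i + 1 = j →
      ∀ x : ↑(K.X j) ⊗[A] (A ⧸ m),
        LinearMap.rTensor (A ⧸ m) (K.d j (j+1)).hom x = 0 →
        ∃ y : ↑(K.X i) ⊗[A] (A ⧸ m),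
          LinearMap.rTensor (A ⧸ m) (K.d i j).hom y = x := by
    intro m hm i j hij
    have h := htens m hm j
    rw [HomologicalComplex.exactAt_iff' _ i j (j+1)
      (by simp [CochainComplex.prev]; omega) (by simp)] at h
    intro x hx
    obtain ⟨y, hy⟩ := (ShortComplex.moduleCat_exact_iff _).mp h x hx
    exact ⟨y, hy⟩
  -- the inductive statement
  let S : ℤ → Prop := fun j =>
    (∃ r : K.X (j+1) →ₗ[A] LinearMap.ker (K.d (j+1) ((j+1)+1)).hom,
        ∀ z : LinearMap.ker (K.d (j+1) ((j+1)+1)).hom,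
          r (z : K.X (j+1)) = z) ∧
      (∀ z : K.X (j+1), (K.d (j+1) ((j+1)+1)).hom z = 0 →
        ∃ y : K.X j, (K.d j (j+1)).hom y = z)
  have hzero : ∀ j : ℤ, b < j → Subsingleton (K.X j) := by
    intro j hj
    have h := (hb j hj).eq_of_src (𝟙 (K.X j)) 0
    refine ⟨fun x y => ?_⟩
    calc x = (𝟙 (K.X j) : K.X j ⟶ K.X j).hom x := rfl
      _ = (0 : K.X j ⟶ K.X j).hom x := by rw [show (𝟙 (K.X j) : K.X j ⟶ K.X j).hom
            = (0 : K.X j ⟶ K.X j).hom from congrArg ModuleCat.Hom.hom h]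
      _ = (0 : K.X j ⟶ K.X j).hom y := rfl
      _ = (𝟙 (K.X j) : K.X j ⟶ K.X j).hom y := by rw [show (𝟙 (K.X j) : K.X j ⟶ K.X j).hom
            = (0 : K.X j ⟶ K.X j).hom from congrArg ModuleCat.Hom.hom h]
      _ = y := rfl
  have hbase : ∀ j : ℤ, b ≤ j → S j := by
    intro j hj
    have hsub : Subsingleton (K.X (j+1)) := hzero (j+1) (by omega)
    constructor
    · refine ⟨0, fun z => ?_⟩
      apply Subtype.ext
      exact Subsingleton.elim _ _
    · intro z hz
      refine ⟨0, ?_⟩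
      have : (K.d j (j+1)).hom 0 = 0 := map_zero _
      rw [this]
      exact Subsingleton.elim _ _
  have hstep : ∀ j : ℤ, S (j+1) → S j := by
    intro j hS1
    obtain ⟨⟨r₁, hr₁⟩, hsurj₁⟩ := hS1
    have hM₁fin : Module.Finite A (K.X (j+1)) := hfin (j+1)
    have hM₂proj : Module.Projective A (K.X ((j+1)+1)) :=
      (IsProjective.iff_projective _).mpr (hproj ((j+1)+1))
    exact step_lemma
      (K.d j (j+1)).hom
      (K.d (j+1) ((j+1)+1)).hom
      (K.d ((j+1)+1) (((j+1)+1)+1)).hom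
      (fun x => LinearMap.congr_fun (congrArg ModuleCat.Hom.hom
        (show (K.d j (j+1) ≫ K.d (j+1) ((j+1)+1) : K.X j ⟶ K.X ((j+1)+1))
           = 0 from K.d_comp_d _ _ _)) x)
      (fun x => LinearMap.congr_fun (congrArg ModuleCat.Hom.hom
        (show (K.d (j+1) ((j+1)+1) ≫ K.d ((j+1)+1) (((j+1)+1)+1)
            : K.X (j+1) ⟶ K.X (((j+1)+1)+1)) = 0 from K.d_comp_d _ _ _)) x)
      r₁ hr₁ hsurj₁
      (fun m hm => htens' m hm j (j+1) rfl)
  have hS : ∀ j : ℤ, S j := by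
    intro j
    rcases le_or_gt b j with hj | hj
    · exact hbase j hj
    · exact Int.le_induction_down (motive := fun n _ => S n) (hbase b le_rfl)
        (fun n _ hn => by
          have := hstep (n-1)
          rw [show (n-1)+1 = n from by omega] at this
          exact this hn) j (le_of_lt hj)
  -- conclude exactness
  intro n
  have hSn := hS (n-1)
  have hE : K.ExactAt ((n-1)+1) := by
    rw [HomologicalComplex.exactAt_iff' _ (n-1) ((n-1)+1) (((n-1)+1)+1)
      (by simp [CochainComplex.prev]) (by simp)]
    rw [ShortComplex.moduleCat_exact_iff]
    intro x hx
    obtain ⟨y, hy⟩ := hSn.2 x hx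
    exact ⟨y, hy⟩
  rw [show n = (n-1)+1 from by omega]
  exact hE

/-- Let `A` be a commutative Noetherian ring and `φ : C• → D•` a morphism of
bounded complexes of finitely generated projective `A`-modules. If for every maximal ideal `m`
of `A` the induced morphism `C• ⊗_A A/m → D• ⊗_A A/m` is a quasi-isomorphism, and all homology
modules of the mapping cone of `φ` are finitely generated, then `φ` is a quasi-isomorphism. -/
theorem quasiIso_of_quasiIso_mod_maximal (A : Type u) [CommRing A] [IsNoetherianRing A]
    (C D : CochainComplex (ModuleCat.{u} A) ℤ) (φ : C ⟶ D)
    (hCproj : ∀ n : ℤ, Projective (C.X n)) (hDproj : ∀ n : ℤ, Projective (D.X n))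
    (hCfin : ∀ n : ℤ, Module.Finite A (C.X n)) (hDfin : ∀ n : ℤ, Module.Finite A (D.X n))
    (hCbdd : ∃ a b : ℤ, ∀ n : ℤ, (n < a ∨ b < n) → IsZero (C.X n))
    (hDbdd : ∃ a b : ℤ, ∀ n : ℤ, (n < a ∨ b < n) → IsZero (D.X n))
    (hcone : ∀ n : ℤ, Module.Finite A ((CochainComplex.mappingCone φ).homology n))
    (hmod : ∀ (m : Ideal A), m.IsMaximal →
      QuasiIso ((Functor.mapHomologicalComplex
        (MonoidalCategory.tensorRight (ModuleCat.of A (A ⧸ m))) (ComplexShape.up ℤ)).map φ)) :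
    QuasiIso φ := by
  rw [quasiIso_iff_mappingCone_exactAt']
  set K := CochainComplex.mappingCone φ with hK
  obtain ⟨aC, bC, hC⟩ := hCbdd
  obtain ⟨aD, bD, hD⟩ := hDbdd
  have hXiso : ∀ n : ℤ, K.X n ≅ C.X (n+1) ⊞ D.X n := fun n =>
    HomologicalComplex.homotopyCofiber.XIsoBiprod φ n (n+1) (by simp)
  have hKproj : ∀ n : ℤ, Projective (K.X n) := fun n =>
    Projective.of_iso (hXiso n).symm inferInstance
  have hKfin : ∀ n : ℤ, Module.Finite A (K.X n) := by
    intro n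
    have e : K.X n ≃ₗ[A] (↑(C.X (n+1)) × ↑(D.X n)) :=
      ((hXiso n).trans (ModuleCat.biprodIsoProd _ _)).toLinearEquiv
    have : Module.Finite A (↑(C.X (n+1)) × ↑(D.X n)) :=
      have := hCfin (n+1); have := hDfin n; inferInstance
    exact Module.Finite.equiv e.symm
  have hKbdd : ∀ n : ℤ, max bC bD < n → IsZero (K.X n) := by
    intro n hn
    refine IsZero.of_iso ?_ (hXiso n)
    rw [biprod_isZero_iff]
    exact ⟨hC (n+1) (Or.inr (by omega)), hD n (Or.inr (by omega))⟩
  have hKtens : ∀ (m : Ideal A), m.IsMaximal → ∀ n : ℤ,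
      (((MonoidalCategory.tensorRight (ModuleCat.of A (A ⧸ m))).mapHomologicalComplex
        (ComplexShape.up ℤ)).obj K).ExactAt n := by
    intro m hm n
    have hq := hmod m hm
    have hcone := (quasiIso_iff_mappingCone_exactAt' _).mp hq n
    exact exactAt_of_iso'
      (CochainComplex.mappingCone.mapHomologicalComplexIso φ
        (MonoidalCategory.tensorRight (ModuleCat.of A (A ⧸ m)))).symm hcone
  exact acyclic_of_tensor_acyclic K hKproj hKfin (max bC bD) hKbdd hKtens
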